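/- For every convex body K ⊂ ℝⁿ, the circumradius of K satisfies R(K) ≤ (2e·Γ(n+3)/(Γ(3)Γ(n)))^{1/2} · V_n(K)^{1/n} · I₂(K̃), where K̃ := V_n(K)^{-1/n}(K − s(K)) is the volume-normalized translate of K with centroid at the origin. -/

import Mathlib

open MeasureTheory
open scoped RealInnerProductSpace

/-- A convex body: a compact convex set with nonempty interior. -/
def IsConvexBody {n : ℕ} (K : Set (EuclideanSpace ℝ (Fin n))) : Prop :=
  IsCompact K ∧ Convex ℝ K ∧ (interior K).Nonempty

/-- The circumradius of a set: the smallest radius of a Euclidean ball containing it. -/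
noncomputable def circumradius {n : ℕ} (K : Set (EuclideanSpace ℝ (Fin n))) : ℝ :=
  sInf {r : ℝ | ∃ c : EuclideanSpace ℝ (Fin n), K ⊆ Metric.closedBall c r}

/-- The center of mass `s(K) = V_n(K)⁻¹ ∫_K x dx` of a set `K`. -/
noncomputable def centerOfMass {n : ℕ} (K : Set (EuclideanSpace ℝ (Fin n))) :
    EuclideanSpace ℝ (Fin n) :=
  ((volume K).toReal)⁻¹ • ∫ x in K, x

/-- The volume-normalized translate `K̃ = V_n(K)^{-1/n} (K - s(K))` of `K`,
with centroid at the origin. -/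
noncomputable def normalizedBody {n : ℕ} (K : Set (EuclideanSpace ℝ (Fin n))) :
    Set (EuclideanSpace ℝ (Fin n)) :=
  (fun x => (((volume K).toReal ^ ((1 : ℝ) / n))⁻¹) • (x - centerOfMass K)) '' K

/-- `I₂(L) = (∫_L ‖x‖² dx)^{1/2}`. -/
noncomputable def I2 {n : ℕ} (L : Set (EuclideanSpace ℝ (Fin n))) : ℝ :=
  Real.sqrt (∫ x in L, ‖x‖ ^ 2)

lemma affine_image_integral {n : ℕ} (a : EuclideanSpace ℝ (Fin n)) (b : ℝ) (hb : b ≠ 0)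
    {s : Set (EuclideanSpace ℝ (Fin n))} (hs : MeasurableSet s) (g : EuclideanSpace ℝ (Fin n) → ℝ) :
    ∫ y in (fun x => a + b • x) '' s, g y = |b| ^ n * ∫ x in s, g (a + b • x) := by
  have hder : ∀ x ∈ s, HasFDerivWithinAt (fun x : EuclideanSpace ℝ (Fin n) => a + b • x)
      (b • ContinuousLinearMap.id ℝ (EuclideanSpace ℝ (Fin n))) s x := by
    intro x hx
    exact ((hasFDerivAt_id x).const_smul b).const_add a |>.hasFDerivWithinAt
  have hinj : Set.InjOn (fun x : EuclideanSpace ℝ (Fin n) => a + b • x) s := by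
    intro x _ y _ h
    simpa [hb] using smul_right_injective _ hb (by simpa using (add_right_injective a h))
  rw [integral_image_eq_integral_abs_det_fderiv_smul volume hs hder hinj g]
  have hdet : (b • ContinuousLinearMap.id ℝ (EuclideanSpace ℝ (Fin n))).det = b ^ n := by
    simp [ContinuousLinearMap.det, finrank_euclideanSpace_fin]
  simp only [hdet, abs_pow, smul_eq_mul]
  exact integral_const_mul _ _

lemma arith_aux {n : ℕ} (hn : 0 < n) :
    ((n:ℝ)+2)^(n+1) ≤ Real.exp 1 * ((n:ℝ)+1)^(n+1) := by
  set m : ℝ := (n:ℝ)+1 with hm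
  have hmpos : 0 < m := by positivity
  have h1 : m + 1 ≤ m * Real.exp (1/m) := by
    have := Real.add_one_le_exp (1/m)
    calc m + 1 = m * (1/m + 1) := by field_simp; ring
    _ ≤ m * Real.exp (1/m) := by nlinarith [hmpos]
  have h2 : ((n:ℝ)+2)^(n+1) ≤ (m * Real.exp (1/m))^(n+1) := by
    apply pow_le_pow_left₀ (by positivity) (by rw [hm]; linarith [h1]) 
  calc ((n:ℝ)+2)^(n+1) ≤ (m * Real.exp (1/m))^(n+1) := h2
    _ = m^(n+1) * Real.exp (1/m)^(n+1) := by rw [mul_pow]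
    _ = Real.exp 1 * m^(n+1) := by
        rw [← Real.exp_nat_mul]
        have : ((n:ℝ)+1) * (1/m) = 1 := by rw [hm]; field_simp
        push_cast
        rw [this]
        ring
    
lemma arith {n : ℕ} (hn : 0 < n) :
    1 / (Real.exp 1 * n * (n+1) * (n+2)) ≤
      (((n:ℝ)+1)/((n:ℝ)+2))^n * (1 - ((n:ℝ)+1)/((n:ℝ)+2))^2 := by
  have hn1 : (1:ℝ) ≤ n := by exact_mod_cast hn
  have h2 : (0:ℝ) < (n:ℝ)+2 := by positivity
  have h1m : 1 - ((n:ℝ)+1)/((n:ℝ)+2) = 1/((n:ℝ)+2) := by field_simp; ring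
  rw [h1m, div_pow, div_pow, div_mul_div_comm, one_pow]
  rw [div_le_div_iff₀ (by positivity) (by positivity)]
  have key := arith_aux hn
  have hpow : ((n:ℝ)+2)^n * ((n:ℝ)+2)^2 = ((n:ℝ)+2)^(n+1) * ((n:ℝ)+2) := by ring
  rw [one_mul, hpow]
  have h3 : ((n:ℝ)+1)^(n+1) ≤ (n:ℝ) * ((n:ℝ)+1)^(n+1) := by nlinarith [pow_pos (by positivity : (0:ℝ) < (n:ℝ)+1) (n+1)]
  have h4 : ((n:ℝ)+1)^(n+1) = ((n:ℝ)+1)^n * ((n:ℝ)+1) := by ring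
  have he : (0:ℝ) < Real.exp 1 := Real.exp_pos 1
  calc ((n:ℝ)+2)^(n+1) * ((n:ℝ)+2) ≤ (Real.exp 1 * ((n:ℝ)+1)^(n+1)) * ((n:ℝ)+2) := by nlinarith
    _ ≤ (Real.exp 1 * ((n:ℝ) * ((n:ℝ)+1)^(n+1))) * ((n:ℝ)+2) := by nlinarith [mul_le_mul_of_nonneg_left h3 he.le]
    _ = ((n:ℝ)+1)^n * 1 * (Real.exp 1 * (n:ℝ) * ((n:ℝ)+1) * ((n:ℝ)+2)) := by rw [h4]; ring

lemma core {n : ℕ} (hn : 0 < n) (L : Set (EuclideanSpace ℝ (Fin n)))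
    (hconv : Convex ℝ L) (hcomp : IsCompact L) (hvol : (volume L).toReal = 1)
    (hcent : ∀ θ : EuclideanSpace ℝ (Fin n), ∫ x in L, ⟪θ, x⟫ = 0)
    {z : EuclideanSpace ℝ (Fin n)} (hz : z ∈ L) :
    ‖z‖^2 ≤ Real.exp 1 * n * (n+1) * (n+2) * ∫ x in L, ‖x‖^2 := by
  have hImeas : MeasurableSet L := hcomp.isClosed.measurableSet
  have hInt2 : IntegrableOn (fun x : EuclideanSpace ℝ (Fin n) => ‖x‖^2) L volume :=
    (continuous_norm.pow 2).continuousOn.integrableOn_compact hcomp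
  have hI2nonneg : 0 ≤ ∫ x in L, ‖x‖^2 :=
    setIntegral_nonneg hImeas (fun x _ => by positivity)
  rcases eq_or_ne z 0 with rfl | hz0
  · have h0 : (0:ℝ) ≤ Real.exp 1 * n * (n+1) * (n+2) := by positivity
    simpa using mul_nonneg h0 hI2nonneg
  -- setup
  set r := ‖z‖ with hr
  have hrpos : 0 < r := norm_pos_iff.mpr hz0
  set θ : EuclideanSpace ℝ (Fin n) := r⁻¹ • z with hθ
  have hθnorm : ‖θ‖ = 1 := by
    rw [hθ, norm_smul, norm_inv, Real.norm_eq_abs, abs_of_pos hrpos, ← hr, inv_mul_cancel₀ hrpos.ne']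
  have hθz : ⟪θ, z⟫ = r := by
    rw [hθ, real_inner_smul_left, real_inner_self_eq_norm_sq, ← hr]
    field_simp
  set t : ℝ := ((n:ℝ)+1)/((n:ℝ)+2) with ht
  have htpos : 0 < t := by positivity
  have ht1 : t < 1 := by
    rw [ht, div_lt_one (by positivity)]; linarith
  set A : Set (EuclideanSpace ℝ (Fin n)) := (fun x => (1-t) • z + t • x) '' L with hA
  have hAsub : A ⊆ L := by
    rintro _ ⟨x, hx, rfl⟩
    exact hconv hz hx (by linarith) htpos.le (by ring)
  -- inner products are integrable on L and A
  have hIntInner : IntegrableOn (fun x : EuclideanSpace ℝ (Fin n) => ⟪θ, x⟫) L volume :=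
    ((innerSL ℝ θ).continuous).continuousOn.integrableOn_compact hcomp
  have hIntInner2 : IntegrableOn (fun x : EuclideanSpace ℝ (Fin n) => ⟪θ, x⟫^2) L volume :=
    (((innerSL ℝ θ).continuous).pow 2).continuousOn.integrableOn_compact hcomp
  -- change of variables
  have hcov : ∫ y in A, ⟪θ, y⟫^2 = t^n * ∫ x in L, ((1-t)*r + t*⟪θ, x⟫)^2 := by
    have := affine_image_integral ((1-t) • z) t htpos.ne' hImeas (fun y => ⟪θ, y⟫^2)
    rw [hA, this, abs_of_pos htpos]
    congr 1
    apply setIntegral_congr_fun hImeas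
    intro x _
    simp only [inner_add_right, real_inner_smul_right, hθz]
  -- lower bound the L-integral
  have hexp : ∫ x in L, ((1-t)*r + t*⟪θ, x⟫)^2
      = ((1-t)*r)^2 + ((2*((1-t)*r)*t) * (∫ x in L, ⟪θ, x⟫) + t^2 * ∫ x in L, ⟪θ, x⟫^2) := by
    have h1 : ∀ x : EuclideanSpace ℝ (Fin n), ((1-t)*r + t*⟪θ, x⟫)^2
        = ((1-t)*r)^2 + ((2*((1-t)*r)*t) * ⟪θ, x⟫ + t^2 * ⟪θ, x⟫^2) := by
      intro x; ring
    have e2 : IntegrableOn (fun x : EuclideanSpace ℝ (Fin n) => (2*((1-t)*r)*t) * ⟪θ, x⟫) L volume :=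
      hIntInner.const_mul _
    have e3 : IntegrableOn (fun x : EuclideanSpace ℝ (Fin n) => t^2 * ⟪θ, x⟫^2) L volume :=
      hIntInner2.const_mul _
    have e1 : IntegrableOn (fun x : EuclideanSpace ℝ (Fin n) =>
        (2*((1-t)*r)*t) * ⟪θ, x⟫ + t^2 * ⟪θ, x⟫^2) L volume := e2.add e3
    rw [setIntegral_congr_fun hImeas (fun x _ => h1 x),
      integral_add (show IntegrableOn (fun _ : EuclideanSpace ℝ (Fin n) => ((1-t)*r)^2) L volume from
        integrableOn_const hcomp.measure_lt_top.ne) e1,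
      integral_add e2 e3]
    rw [setIntegral_const, measureReal_def, hvol, smul_eq_mul, one_mul, integral_const_mul, integral_const_mul]
  have hlow : t^n * ((1-t)*r)^2 ≤ ∫ y in A, ⟪θ, y⟫^2 := by
    rw [hcov, hexp, hcent θ]
    have hJ : 0 ≤ ∫ x in L, ⟪θ, x⟫^2 := setIntegral_nonneg hImeas (fun x _ => sq_nonneg _)
    have htn : (0:ℝ) ≤ t^n := (pow_pos htpos n).le
    nlinarith [mul_nonneg htn (mul_nonneg (sq_nonneg t) hJ)]
  -- compare with ∫ ‖x‖²
  have hcomp2 : ∫ y in A, ⟪θ, y⟫^2 ≤ ∫ y in A, ‖y‖^2 := by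
    have hAcomp : IsCompact A := (hcomp.image (continuous_const.add (continuous_id.const_smul t)))
    apply setIntegral_mono_on
      (((innerSL ℝ θ).continuous.pow 2).continuousOn.integrableOn_compact hAcomp)
      ((continuous_norm.pow 2).continuousOn.integrableOn_compact hAcomp)
      hAcomp.isClosed.measurableSet
    intro x _
    have h := abs_real_inner_le_norm θ x
    rw [hθnorm, one_mul] at h
    calc ⟪θ, x⟫^2 = |⟪θ, x⟫|^2 := (sq_abs _).symm
      _ ≤ ‖x‖^2 := by nlinarith [abs_nonneg ⟪θ, x⟫]
  have hmono : ∫ y in A, ‖y‖^2 ≤ ∫ y in L, ‖y‖^2 := by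
    apply setIntegral_mono_set hInt2
    · exact Filter.Eventually.of_forall (fun x => by positivity)
    · exact Filter.Eventually.of_forall hAsub
  -- arithmetic
  have harith : 1 / (Real.exp 1 * n * (n+1) * (n+2)) ≤ t^n * (1-t)^2 := arith hn
  have hchain : t^n * (1-t)^2 * r^2 ≤ ∫ y in L, ‖y‖^2 := by
    calc t^n * (1-t)^2 * r^2 = t^n * ((1-t)*r)^2 := by ring
      _ ≤ ∫ y in A, ⟪θ, y⟫^2 := hlow
      _ ≤ ∫ y in A, ‖y‖^2 := hcomp2
      _ ≤ ∫ y in L, ‖y‖^2 := hmono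
  have hC : 0 < Real.exp 1 * n * (n+1) * (n+2) := by
    have : (0:ℝ) < n := by exact_mod_cast hn
    positivity
  calc r^2 = (Real.exp 1 * n * (n+1) * (n+2)) * (1/(Real.exp 1 * n * (n+1) * (n+2)) * r^2) := by
        field_simp
    _ ≤ (Real.exp 1 * n * (n+1) * (n+2)) * (t^n * (1-t)^2 * r^2) := by
        apply mul_le_mul_of_nonneg_left _ hC.le
        apply mul_le_mul_of_nonneg_right harith (sq_nonneg r)
    _ ≤ Real.exp 1 * n * (n+1) * (n+2) * ∫ y in L, ‖y‖^2 :=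
        mul_le_mul_of_nonneg_left hchain hC.le

lemma gamma_eq_aux {n : ℕ} (hn : 0 < n) :
    2 * Real.exp 1 * Real.Gamma (n + 3) / (Real.Gamma 3 * Real.Gamma n)
      = Real.exp 1 * n * ((n:ℝ)+1) * ((n:ℝ)+2) := by
  obtain ⟨m, rfl⟩ : ∃ m, n = m + 1 := ⟨n-1, (Nat.succ_pred_eq_of_pos hn).symm⟩
  have h3 : Real.Gamma (((m+1:ℕ):ℝ) + 3) = (m+3).factorial := by
    have h : ((m+1:ℕ):ℝ) + 3 = ((m+3:ℕ):ℝ) + 1 := by push_cast; ring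
    rw [h, Real.Gamma_nat_eq_factorial]
  have h2 : Real.Gamma 3 = 2 := by
    have h : (3:ℝ) = ((2:ℕ):ℝ) + 1 := by norm_num
    rw [h, Real.Gamma_nat_eq_factorial]; norm_num
  have h1 : Real.Gamma ((m+1:ℕ):ℝ) = m.factorial := by
    have h : ((m+1:ℕ):ℝ) = ((m:ℕ):ℝ) + 1 := by push_cast; ring
    rw [h, Real.Gamma_nat_eq_factorial]
  rw [h3, h2, h1]
  have hfac : (((m+3).factorial : ℕ) : ℝ)
      = (((m:ℕ):ℝ)+3) * (((m:ℕ):ℝ)+2) * (((m:ℕ):ℝ)+1) * (m.factorial : ℕ) := by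
    rw [show m+3 = (m+2)+1 from rfl, Nat.factorial_succ, show m+2 = (m+1)+1 from rfl,
      Nat.factorial_succ, Nat.factorial_succ]
    push_cast; ring
  rw [hfac]
  have hmf : ((m.factorial : ℕ) : ℝ) ≠ 0 := by
    exact_mod_cast m.factorial_pos.ne'
  field_simp
  push_cast
  ring
/-- For every convex body `K ⊆ ℝⁿ`,
`R(K) ≤ (2e Γ(n+3)/(Γ(3)Γ(n)))^{1/2} V_n(K)^{1/n} I₂(K̃)`. -/
theorem circumradius_bound {n : ℕ} (hn : 0 < n)
    (K : Set (EuclideanSpace ℝ (Fin n))) (hK : IsConvexBody K) :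
    circumradius K ≤
      Real.sqrt (2 * Real.exp 1 * Real.Gamma (n + 3) / (Real.Gamma 3 * Real.Gamma n)) *
        (volume K).toReal ^ ((1 : ℝ) / n) * I2 (normalizedBody K) := by
  obtain ⟨hKc, hKconv, hKint⟩ := hK
  have hKne : K.Nonempty := hKint.mono interior_subset
  have hKmeas : MeasurableSet K := hKc.isClosed.measurableSet
  set V := (volume K).toReal with hVdef
  have hVpos : 0 < V := by
    rw [hVdef]
    refine ENNReal.toReal_pos ?_ hKc.measure_lt_top.ne
    have h2 : 0 < volume (interior K) := isOpen_interior.measure_pos volume hKint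
    exact (h2.trans_le (measure_mono interior_subset)).ne'
  set lam := V ^ ((1:ℝ)/(n:ℝ)) with hlam
  have hlampos : 0 < lam := Real.rpow_pos_of_pos hVpos _
  have hnne : ((n:ℝ)) ≠ 0 := by exact_mod_cast hn.ne'
  have hlampow : lam ^ n = V := by
    rw [hlam, ← Real.rpow_natCast (V ^ ((1:ℝ)/(n:ℝ))) n, ← Real.rpow_mul hVpos.le]
    rw [one_div, inv_mul_cancel₀ hnne, Real.rpow_one]
  set c := centerOfMass K with hc
  set L := normalizedBody K with hLdef
  set a0 : EuclideanSpace ℝ (Fin n) := -(lam⁻¹ • c) with ha0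
  have hLeq : L = (fun x => a0 + lam⁻¹ • x) '' K := by
    rw [hLdef]
    simp only [normalizedBody, ← hVdef, ← hc, ← hlam]
    apply Set.image_congr
    intro x _
    rw [smul_sub, ha0]
    abel
  have hmap : Continuous (fun x : EuclideanSpace ℝ (Fin n) => a0 + lam⁻¹ • x) :=
    continuous_const.add (continuous_const_smul _)
  have hLcomp : IsCompact L := hLeq ▸ hKc.image hmap
  have hLconv : Convex ℝ L := by
    rw [hLeq]
    rintro _ ⟨x, hx, rfl⟩ _ ⟨y, hy, rfl⟩ p q hp hq hpq
    refine ⟨p • x + q • y, hKconv hx hy hp hq hpq, ?_⟩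
    have hq' : q = 1 - p := by linarith
    subst hq'
    module
  have hvolL : (volume L).toReal = 1 := by
    have h := affine_image_integral a0 lam⁻¹ (inv_ne_zero hlampos.ne') hKmeas (fun _ => (1:ℝ))
    rw [← hLeq, setIntegral_const, setIntegral_const, smul_eq_mul, smul_eq_mul,
      mul_one, mul_one, measureReal_def, measureReal_def, ← hVdef] at h
    rw [h, abs_of_pos (inv_pos.mpr hlampos), inv_pow, hlampow, inv_mul_cancel₀ hVpos.ne']
  have hintK : IntegrableOn (fun x : EuclideanSpace ℝ (Fin n) => x) K volume :=
    continuousOn_id.integrableOn_compact hKc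
  have hcK : ∫ x in K, x = V • c := by
    rw [hc]
    simp only [centerOfMass, ← hVdef]
    rw [smul_smul, mul_inv_cancel₀ hVpos.ne', one_smul]
  have hcent : ∀ θ : EuclideanSpace ℝ (Fin n), ∫ x in L, ⟪θ, x⟫ = 0 := by
    intro θ
    have h := affine_image_integral a0 lam⁻¹ (inv_ne_zero hlampos.ne') hKmeas (fun y => ⟪θ, y⟫)
    rw [← hLeq] at h
    have hinner : ∀ x ∈ K, ⟪θ, a0 + lam⁻¹ • x⟫ = ⟪θ, a0⟫ + lam⁻¹ * ⟪θ, x⟫ := fun x _ => by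
      rw [inner_add_right, real_inner_smul_right]
    rw [setIntegral_congr_fun hKmeas hinner] at h
    have hIntInnerK : IntegrableOn (fun x : EuclideanSpace ℝ (Fin n) => ⟪θ, x⟫) K volume :=
      ((innerSL ℝ θ).continuous).continuousOn.integrableOn_compact hKc
    rw [integral_add (integrableOn_const (C := ⟪θ, a0⟫) hKc.measure_lt_top.ne)
      (hIntInnerK.const_mul _), setIntegral_const, smul_eq_mul, integral_const_mul] at h
    have hK1 : ∫ x in K, ⟪θ, x⟫ = V * ⟪θ, c⟫ := by
      rw [integral_inner hintK θ, hcK, real_inner_smul_right]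
    have ha0i : ⟪θ, a0⟫ = -(lam⁻¹ * ⟪θ, c⟫) := by
      rw [ha0, inner_neg_right, real_inner_smul_right]
    rw [hK1, ha0i, measureReal_def, ← hVdef] at h
    rw [h]; ring
  -- the main bound: K is contained in a ball around c
  set C2 : ℝ := Real.exp 1 * n * ((n:ℝ)+1) * ((n:ℝ)+2) with hC2
  have hC2nonneg : 0 ≤ C2 := by rw [hC2]; positivity
  have hI2 : I2 L = Real.sqrt (∫ x in L, ‖x‖^2) := rfl
  have hball : ∀ x ∈ K, dist x c ≤ Real.sqrt C2 * lam * I2 L := by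
    intro x hx
    have hzL : a0 + lam⁻¹ • x ∈ L := hLeq ▸ ⟨x, hx, rfl⟩
    have hb := core hn L hLconv hLcomp hvolL hcent hzL
    have h1 : ‖a0 + lam⁻¹ • x‖ ≤ Real.sqrt C2 * I2 L := by
      have hs := Real.sqrt_le_sqrt hb
      rw [Real.sqrt_sq (norm_nonneg _)] at hs
      calc ‖a0 + lam⁻¹ • x‖
          ≤ Real.sqrt (Real.exp 1 * n * ((n:ℝ)+1) * ((n:ℝ)+2) * ∫ y in L, ‖y‖^2) := hs
        _ = Real.sqrt C2 * Real.sqrt (∫ y in L, ‖y‖^2) := by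
            rw [← hC2, Real.sqrt_mul hC2nonneg]
        _ = Real.sqrt C2 * I2 L := by rw [hI2]
    have h2 : dist x c = lam * ‖a0 + lam⁻¹ • x‖ := by
      rw [dist_eq_norm]
      have hsm : lam • (a0 + lam⁻¹ • x) = x - c := by
        rw [ha0, smul_add, smul_neg, smul_smul, smul_smul, mul_inv_cancel₀ hlampos.ne',
          one_smul, one_smul]
        abel
      rw [← hsm, norm_smul, Real.norm_eq_abs, abs_of_pos hlampos]
    rw [h2]
    calc lam * ‖a0 + lam⁻¹ • x‖ ≤ lam * (Real.sqrt C2 * I2 L) :=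
          mul_le_mul_of_nonneg_left h1 hlampos.le
      _ = Real.sqrt C2 * lam * I2 L := by ring
  have hmem : Real.sqrt C2 * lam * I2 L
      ∈ {r : ℝ | ∃ c' : EuclideanSpace ℝ (Fin n), K ⊆ Metric.closedBall c' r} :=
    ⟨c, fun x hx => Metric.mem_closedBall.mpr (hball x hx)⟩
  have hbdd : BddBelow {r : ℝ | ∃ c' : EuclideanSpace ℝ (Fin n), K ⊆ Metric.closedBall c' r} := by
    refine ⟨0, fun r hr => ?_⟩
    obtain ⟨c', hc'⟩ := hr
    obtain ⟨x0, hx0⟩ := hKne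
    exact dist_nonneg.trans (hc' hx0)
  have hgoal : circumradius K ≤ Real.sqrt C2 * lam * I2 L := csInf_le hbdd hmem
  rw [gamma_eq_aux hn]
  exact hgoal
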